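/- Let ρ_{xy} = Σ_{a,b∈{↑,↓}} p_{ab} |ab⟩⟨ab| be a diagonal (classically correlated) two-qubit state with marginal ρ_x, and let τ_{x'x} = |w⟩⟨w| with |w⟩ = √(p_{↑↑}+p_{↑↓})|↑↑⟩ + √(p_{↓↑}+p_{↓↓})|↓↓⟩ be a purification of ρ_x. Let N be the dephasing channel N(ρ) = ½(K₁ρK₁† + K₂ρK₂†) with K₁ = |↑⟩⟨↑| − |↓⟩⟨↓| and K₂ = I. Then (N ⊗ I_y)(ρ_{xy}) = ρ_{xy} (so I(X̃;Y) = I(X;Y)), while the output τ_{x'x̃} = (I_{x'} ⊗ N)(τ_{x'x}) satisfies I(X';X̃)_{τ_{x'x̃}} = ½ I(X';X)_{τ_{x'x}}. -/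

import Mathlib

open scoped Kronecker BigOperators ComplexOrder
open Matrix

noncomputable section

/-- von Neumann entropy (natural log) of a Hermitian matrix via its eigenvalues. -/
noncomputable def vnEntropy {n : Type*} [Fintype n] [DecidableEq n] (ρ : Matrix n n ℂ) : ℝ :=
  if h : ρ.IsHermitian then -∑ i, h.eigenvalues i * Real.log (h.eigenvalues i) else 0

/-- A density operator: positive semidefinite with unit trace. -/
def IsDensity {n : Type*} [Fintype n] [DecidableEq n] (ρ : Matrix n n ℂ) : Prop :=
  ρ.PosSemidef ∧ ρ.trace = 1

/-- Partial trace over the second tensor factor. -/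
def ptraceSnd {A B : Type*} [Fintype A] [Fintype B] (ρ : Matrix (A × B) (A × B) ℂ) :
    Matrix A A ℂ :=
  Matrix.of fun a a' => ∑ b, ρ (a, b) (a', b)

/-- Partial trace over the first tensor factor. -/
def ptraceFst {A B : Type*} [Fintype A] [Fintype B] (ρ : Matrix (A × B) (A × B) ℂ) :
    Matrix B B ℂ :=
  Matrix.of fun b b' => ∑ a, ρ (a, b) (a, b')

/-- Quantum mutual information I(A;B) = S(ρ_A) + S(ρ_B) - S(ρ_AB). -/
noncomputable def mutInfo {A B : Type*} [Fintype A] [Fintype B] [DecidableEq A] [DecidableEq B]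
    (ρ : Matrix (A × B) (A × B) ℂ) : ℝ :=
  vnEntropy (ptraceSnd ρ) + vnEntropy (ptraceFst ρ) - vnEntropy ρ

/-- Trace norm of a Hermitian matrix: sum of the absolute values of its eigenvalues. -/
noncomputable def traceNorm {n : Type*} [Fintype n] [DecidableEq n] (M : Matrix n n ℂ) : ℝ :=
  if h : M.IsHermitian then ∑ i, |h.eigenvalues i| else 0

/-- Choi–Jamiołkowski matrix of a linear map on matrices. -/
def choiMatrix {X Xt : Type*} [Fintype X] [DecidableEq X] [Fintype Xt]
    (N : Matrix X X ℂ →ₗ[ℂ] Matrix Xt Xt ℂ) : Matrix (X × Xt) (X × Xt) ℂ :=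
  Matrix.of fun p q => N (Matrix.single p.1 q.1 1) p.2 q.2

/-- A completely positive trace preserving map (quantum channel), characterised by
positive semidefiniteness of its Choi matrix together with trace preservation. -/
structure IsCPTP {X Xt : Type*} [Fintype X] [DecidableEq X] [Fintype Xt] [DecidableEq Xt]
    (N : Matrix X X ℂ →ₗ[ℂ] Matrix Xt Xt ℂ) : Prop where
  cp : (choiMatrix N).PosSemidef
  tp : ∀ ρ, (N ρ).trace = ρ.trace

/-- Application of `N ⊗ I` to a bipartite state (channel acts on the first factor). -/
def applyFst {X Xt Y : Type*} [Fintype X] [DecidableEq X] [Fintype Y]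
    (N : Matrix X X ℂ →ₗ[ℂ] Matrix Xt Xt ℂ) (ρ : Matrix (X × Y) (X × Y) ℂ) :
    Matrix (Xt × Y) (Xt × Y) ℂ :=
  Matrix.of fun p q => ∑ i, ∑ j, N (Matrix.single i j 1) p.1 q.1 * ρ (i, p.2) (j, q.2)

/-- Application of `I ⊗ N` to a bipartite state (channel acts on the second factor). -/
def applySnd {X Xt Y : Type*} [Fintype X] [DecidableEq X] [Fintype Y]
    (N : Matrix X X ℂ →ₗ[ℂ] Matrix Xt Xt ℂ) (ρ : Matrix (Y × X) (Y × X) ℂ) :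
    Matrix (Y × Xt) (Y × Xt) ℂ :=
  Matrix.of fun p q => ∑ i, ∑ j, N (Matrix.single i j 1) p.2 q.2 * ρ (p.1, i) (q.1, j)

end


noncomputable section Aux
open Polynomial
namespace DephAux

variable {n : Type*} [Fintype n] [DecidableEq n]

lemma charmatrix_conj (U A : Matrix n n ℂ) (hU : U * Uᴴ = 1) :
    charmatrix (U * A * Uᴴ) = (U.map C) * charmatrix A * (Uᴴ.map C) := by
  have hmap : ∀ M N : Matrix n n ℂ, (M * N).map (C : ℂ → ℂ[X]) =
      M.map C * N.map C := fun M N => Matrix.map_mul (f := (C : ℂ →+* ℂ[X]))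
  unfold charmatrix
  simp only [RingHom.mapMatrix_apply]
  rw [mul_sub, sub_mul]
  congr 1
  · have h1 : (Matrix.scalar n (X : ℂ[X])) = (X : ℂ[X]) • (1 : Matrix n n ℂ[X]) := by
      simp [Matrix.scalar, Matrix.smul_one_eq_diagonal]
    rw [h1, Matrix.mul_smul, Matrix.smul_mul, mul_one, ← hmap, hU]
    simp [Matrix.map_one]
  · rw [← hmap, ← hmap]

lemma charpoly_conj (U A : Matrix n n ℂ) (hU : U * Uᴴ = 1) :
    (U * A * Uᴴ).charpoly = A.charpoly := by
  unfold Matrix.charpoly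
  rw [charmatrix_conj U A hU, det_mul, det_mul]
  have : (U.map (C : ℂ → ℂ[X])).det * (Uᴴ.map C).det = 1 := by
    rw [← det_mul, ← Matrix.map_mul (f := (C : ℂ →+* ℂ[X])), hU]
    simp [Matrix.map_one]
  calc (U.map (C : ℂ → ℂ[X])).det * (charmatrix A).det * (Uᴴ.map C).det
      = (charmatrix A).det * ((U.map C).det * (Uᴴ.map C).det) := by ring
    _ = (charmatrix A).det := by rw [this, mul_one]

lemma charpoly_diagonal (d : n → ℂ) :
    (Matrix.diagonal d).charpoly = ∏ i, (X - C (d i)) := by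
  unfold Matrix.charpoly
  have : charmatrix (Matrix.diagonal d) = Matrix.diagonal fun i => (X - C (d i)) := by
    ext i j
    by_cases h : i = j
    · subst h; simp [charmatrix_apply]
    · simp [charmatrix_apply_ne _ _ _ h, Matrix.diagonal_apply_ne _ h,
        Matrix.diagonal_apply_ne' _ (Ne.symm h)]
  rw [this, det_diagonal]

lemma charpoly_isHermitian (A : Matrix n n ℂ) (hA : A.IsHermitian) :
    A.charpoly = ∏ i, (X - C ((hA.eigenvalues i : ℝ) : ℂ)) := by
  have hU : (hA.eigenvectorUnitary : Matrix n n ℂ) * (hA.eigenvectorUnitary : Matrix n n ℂ)ᴴ = 1 := by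
    rw [← Matrix.star_eq_conjTranspose]
    exact (Matrix.mem_unitaryGroup_iff.mp hA.eigenvectorUnitary.2)
  conv_lhs => rw [hA.spectral_theorem, Unitary.conjStarAlgAut_apply]
  rw [show star (hA.eigenvectorUnitary : Matrix n n ℂ) = (hA.eigenvectorUnitary : Matrix n n ℂ)ᴴ
    from Matrix.star_eq_conjTranspose _]
  rw [charpoly_conj _ _ hU, charpoly_diagonal]
  rfl

/-- Key: if the charpoly is `∏ (X - C (d i))` with `d` real, then any symmetric function
of the eigenvalues equals the same function of `d`. -/
lemma sum_g_eigenvalues (A : Matrix n n ℂ) (hA : A.IsHermitian) (d : n → ℝ)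
    (h : A.charpoly = ∏ i, (X - C ((d i : ℝ) : ℂ))) (g : ℝ → ℝ) :
    ∑ i, g (hA.eigenvalues i) = ∑ i, g (d i) := by
  have h1 : A.charpoly.roots = (Finset.univ.val.map fun i => ((d i : ℝ) : ℂ)) := by
    rw [h]
    have := Polynomial.roots_multiset_prod_X_sub_C (Finset.univ.val.map fun i => ((d i : ℝ) : ℂ))
    rw [← this, Multiset.map_map]
    rfl
  have h2 : A.charpoly.roots = (Finset.univ.val.map fun i => ((hA.eigenvalues i : ℝ) : ℂ)) := by
    rw [charpoly_isHermitian A hA]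
    have := Polynomial.roots_multiset_prod_X_sub_C
      (Finset.univ.val.map fun i => ((hA.eigenvalues i : ℝ) : ℂ))
    rw [← this, Multiset.map_map]
    rfl
  have key : (Finset.univ.val.map fun i => ((hA.eigenvalues i : ℝ) : ℂ)) =
      (Finset.univ.val.map fun i => ((d i : ℝ) : ℂ)) := h2 ▸ h1
  have h3 := congrArg (fun m : Multiset ℂ => (m.map fun z => g z.re).sum) key
  simp only [Multiset.map_map, Function.comp, Complex.ofReal_re] at h3
  exact h3


lemma vnEntropy_diagonal_real (d : n → ℝ) :
    vnEntropy (Matrix.diagonal (fun i => ((d i : ℝ) : ℂ))) = -∑ i, d i * Real.log (d i) := by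
  have hA : (Matrix.diagonal (fun i => ((d i : ℝ) : ℂ))).IsHermitian := by
    rw [Matrix.IsHermitian, Matrix.diagonal_conjTranspose]
    funext i
    exact congrFun (congrArg _ (funext fun j => Complex.conj_ofReal (d j))) i
  rw [vnEntropy, dif_pos hA, neg_inj]
  exact sum_g_eigenvalues _ hA d (charpoly_diagonal _) (fun x => x * Real.log x)

lemma vnEntropy_of_charpoly (A : Matrix n n ℂ) (hA : A.IsHermitian) (d : n → ℝ)
    (h : A.charpoly = ∏ i, (X - C ((d i : ℝ) : ℂ))) :
    vnEntropy A = -∑ i, d i * Real.log (d i) := by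
  rw [vnEntropy, dif_pos hA, neg_inj]
  exact sum_g_eigenvalues A hA d h (fun x => x * Real.log x)

def qe : Fin 2 × Fin 2 ≃ Fin 4 where
  toFun q := ⟨2 * q.1.val + q.2.val, by omega⟩
  invFun := ![(0,0),(0,1),(1,0),(1,1)]
  left_inv := by decide
  right_inv := by decide

end DephAux
end Aux

set_option maxHeartbeats 4000000 in
/-- The two-qubit dephasing example: for the classically correlated state
`ρ_{xy} = Σ_{ab} p_{ab} |ab⟩⟨ab|` with purification `τ_{x'x} = |w⟩⟨w|`,
`|w⟩ = √(p_{↑↑}+p_{↑↓})|↑↑⟩ + √(p_{↓↑}+p_{↓↓})|↓↓⟩`, and the dephasing channel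
`N(ρ) = ½(K₁ρK₁† + ρ)` with `K₁ = |↑⟩⟨↑| − |↓⟩⟨↓|`, one has
`(N ⊗ I_y)(ρ_{xy}) = ρ_{xy}` (hence `I(X̃;Y) = I(X;Y)`), while
`I(X';X̃)_{(I ⊗ N)(τ)} = ½ I(X';X)_τ`.  (Basis: `0 = ↑`, `1 = ↓`.) -/
theorem dephasing_example
    (p : Fin 2 → Fin 2 → ℝ) (hp : ∀ a b, 0 ≤ p a b) (hsum : ∑ a, ∑ b, p a b = 1)
    (px : Fin 2 → ℝ) (hpx : px = fun a => p a 0 + p a 1)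
    (hpos : ∀ a, 0 < px a)
    (ρxy : Matrix (Fin 2 × Fin 2) (Fin 2 × Fin 2) ℂ)
    (hρxy : ρxy = Matrix.of fun q r => if q = r then ((p q.1 q.2 : ℝ) : ℂ) else 0)
    (w : Fin 2 × Fin 2 → ℂ)
    (hw : w = fun q => if q.1 = q.2 then ((Real.sqrt (px q.1) : ℝ) : ℂ) else 0)
    (τ : Matrix (Fin 2 × Fin 2) (Fin 2 × Fin 2) ℂ)
    (hτ : τ = Matrix.of fun q r => w q * star (w r))
    (K₁ : Matrix (Fin 2) (Fin 2) ℂ) (hK₁ : K₁ = Matrix.diagonal ![1, -1])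
    (ρout : Matrix (Fin 2 × Fin 2) (Fin 2 × Fin 2) ℂ)
    (hρout : ρout = ((1 : ℂ)/2) •
      ((K₁ ⊗ₖ (1 : Matrix (Fin 2) (Fin 2) ℂ)) * ρxy * ((K₁ᴴ) ⊗ₖ (1 : Matrix (Fin 2) (Fin 2) ℂ))
        + ρxy))
    (τout : Matrix (Fin 2 × Fin 2) (Fin 2 × Fin 2) ℂ)
    (hτout : τout = ((1 : ℂ)/2) •
      (((1 : Matrix (Fin 2) (Fin 2) ℂ) ⊗ₖ K₁) * τ * ((1 : Matrix (Fin 2) (Fin 2) ℂ) ⊗ₖ (K₁ᴴ))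
        + τ)) :
    ρout = ρxy ∧ mutInfo τout = (1/2) * mutInfo τ := by

  subst hρxy hK₁ hρout
  have hpx0 : px 0 = p 0 0 + p 0 1 := by rw [hpx]
  have hpx1 : px 1 = p 1 0 + p 1 1 := by rw [hpx]
  simp only [Fin.sum_univ_two] at hsum
  have hpx01 : px 0 + px 1 = 1 := by rw [hpx0, hpx1]; linarith
  have ha : ((Real.sqrt (px 0) : ℝ) : ℂ) * ((Real.sqrt (px 0) : ℝ) : ℂ) = ((px 0 : ℝ) : ℂ) := by
    rw [← Complex.ofReal_mul, Real.mul_self_sqrt (hpos 0).le]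
  have hb : ((Real.sqrt (px 1) : ℝ) : ℂ) * ((Real.sqrt (px 1) : ℝ) : ℂ) = ((px 1 : ℝ) : ℂ) := by
    rw [← Complex.ofReal_mul, Real.mul_self_sqrt (hpos 1).le]
  constructor
  · ext ⟨i, j⟩ ⟨k, l⟩
    fin_cases i <;> fin_cases j <;> fin_cases k <;> fin_cases l <;>
      (try simp [Matrix.mul_apply, Matrix.kroneckerMap_apply, Fintype.sum_prod_type,
        Fin.sum_univ_two, Matrix.one_apply, Prod.ext_iff, Matrix.diagonal_apply]) <;>
      (try ring)
  · have hab : ((Real.sqrt (px 0) : ℝ) : ℂ) ^ 2 + ((Real.sqrt (px 1) : ℝ) : ℂ) ^ 2 = 1 := by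
      rw [sq, sq, ha, hb, ← Complex.ofReal_add, hpx01, Complex.ofReal_one]
    have hτout' : τout = Matrix.diagonal (fun q : Fin 2 × Fin 2 =>
        (((if q.1 = q.2 then px q.1 else 0 : ℝ)) : ℂ)) := by
      rw [hτout, hτ, hw]
      ext ⟨i, j⟩ ⟨k, l⟩
      fin_cases i <;> fin_cases j <;> fin_cases k <;> fin_cases l <;>
        (try simp [Matrix.mul_apply, Matrix.kroneckerMap_apply, Fintype.sum_prod_type,
          Fin.sum_univ_two, Matrix.one_apply, Prod.ext_iff, Matrix.diagonal_apply,
          Complex.conj_ofReal, ha, hb]) <;> (try ring)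
    have hm1 : ptraceSnd τout = Matrix.diagonal (fun i : Fin 2 => ((px i : ℝ) : ℂ)) := by
      rw [hτout']
      ext i k
      fin_cases i <;> fin_cases k <;>
        simp [ptraceSnd, Fin.sum_univ_two, Matrix.diagonal_apply, Prod.ext_iff]
    have hm2 : ptraceFst τout = Matrix.diagonal (fun i : Fin 2 => ((px i : ℝ) : ℂ)) := by
      rw [hτout']
      ext i k
      fin_cases i <;> fin_cases k <;>
        simp [ptraceFst, Fin.sum_univ_two, Matrix.diagonal_apply, Prod.ext_iff]
    have hm3 : ptraceSnd τ = Matrix.diagonal (fun i : Fin 2 => ((px i : ℝ) : ℂ)) := by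
      rw [hτ, hw]
      ext i k
      fin_cases i <;> fin_cases k <;>
        (try simp [ptraceSnd, Fin.sum_univ_two, Matrix.diagonal_apply, Prod.ext_iff,
          Complex.conj_ofReal, ha, hb])
    have hm4 : ptraceFst τ = Matrix.diagonal (fun i : Fin 2 => ((px i : ℝ) : ℂ)) := by
      rw [hτ, hw]
      ext i k
      fin_cases i <;> fin_cases k <;>
        (try simp [ptraceFst, Fin.sum_univ_two, Matrix.diagonal_apply, Prod.ext_iff,
          Complex.conj_ofReal, ha, hb])
    have hτherm : τ.IsHermitian := by
      rw [hτ]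
      ext q r
      simp [Matrix.conjTranspose_apply, mul_comm]
    have hτ'' : τ = Matrix.of (fun q r : Fin 2 × Fin 2 =>
        (if q.1 = q.2 then (if q.1 = 0 then ((Real.sqrt (px 0) : ℝ) : ℂ) else ((Real.sqrt (px 1) : ℝ) : ℂ)) else 0) *
        (if r.1 = r.2 then (if r.1 = 0 then ((Real.sqrt (px 0) : ℝ) : ℂ) else ((Real.sqrt (px 1) : ℝ) : ℂ)) else 0)) := by
      rw [hτ, hw]
      ext ⟨i, j⟩ ⟨k, l⟩
      fin_cases i <;> fin_cases j <;> fin_cases k <;> fin_cases l <;>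
        simp [Complex.conj_ofReal]
    have hchar : τ.charpoly = ∏ q : Fin 2 × Fin 2,
        (Polynomial.X - Polynomial.C
          (((if q = ((0 : Fin 2), (0 : Fin 2)) then (1 : ℝ) else 0) : ℝ) : ℂ)) := by
      rw [hτ'', ← Matrix.charpoly_reindex DephAux.qe]
      have hM : Matrix.reindex DephAux.qe DephAux.qe
          (Matrix.of (fun q r : Fin 2 × Fin 2 =>
            (if q.1 = q.2 then (if q.1 = 0 then ((Real.sqrt (px 0) : ℝ) : ℂ) else ((Real.sqrt (px 1) : ℝ) : ℂ)) else 0) *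
            (if r.1 = r.2 then (if r.1 = 0 then ((Real.sqrt (px 0) : ℝ) : ℂ) else ((Real.sqrt (px 1) : ℝ) : ℂ)) else 0))) =
          !![((Real.sqrt (px 0) : ℝ) : ℂ)*((Real.sqrt (px 0) : ℝ) : ℂ), 0, 0, ((Real.sqrt (px 0) : ℝ) : ℂ)*((Real.sqrt (px 1) : ℝ) : ℂ); 0,0,0,0; 0,0,0,0; ((Real.sqrt (px 1) : ℝ) : ℂ)*((Real.sqrt (px 0) : ℝ) : ℂ), 0, 0, ((Real.sqrt (px 1) : ℝ) : ℂ)*((Real.sqrt (px 1) : ℝ) : ℂ)] := by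
        ext i j
        fin_cases i <;> fin_cases j <;>
          simp [Matrix.reindex_apply, Matrix.submatrix_apply, DephAux.qe,
            Matrix.vecHead, Matrix.vecTail]
      rw [hM]
      have hcm : Matrix.charmatrix
          !![((Real.sqrt (px 0) : ℝ) : ℂ)*((Real.sqrt (px 0) : ℝ) : ℂ), 0, 0, ((Real.sqrt (px 0) : ℝ) : ℂ)*((Real.sqrt (px 1) : ℝ) : ℂ); 0,0,0,0; 0,0,0,0; ((Real.sqrt (px 1) : ℝ) : ℂ)*((Real.sqrt (px 0) : ℝ) : ℂ), 0, 0, ((Real.sqrt (px 1) : ℝ) : ℂ)*((Real.sqrt (px 1) : ℝ) : ℂ)] =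
          !![Polynomial.X - Polynomial.C (((Real.sqrt (px 0) : ℝ) : ℂ)*((Real.sqrt (px 0) : ℝ) : ℂ)), 0, 0, -Polynomial.C (((Real.sqrt (px 0) : ℝ) : ℂ)*((Real.sqrt (px 1) : ℝ) : ℂ));
             0, Polynomial.X, 0, 0; 0, 0, Polynomial.X, 0;
             -Polynomial.C (((Real.sqrt (px 1) : ℝ) : ℂ)*((Real.sqrt (px 0) : ℝ) : ℂ)), 0, 0, Polynomial.X - Polynomial.C (((Real.sqrt (px 1) : ℝ) : ℂ)*((Real.sqrt (px 1) : ℝ) : ℂ))] := by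
        ext i j
        fin_cases i <;> fin_cases j <;>
          simp [Matrix.charmatrix_apply, Matrix.diagonal_apply, Matrix.vecHead, Matrix.vecTail]
      rw [Matrix.charpoly, hcm]
      have hC : Polynomial.C ((Real.sqrt (px 0) : ℝ) : ℂ) * Polynomial.C ((Real.sqrt (px 0) : ℝ) : ℂ) +
          Polynomial.C ((Real.sqrt (px 1) : ℝ) : ℂ) * Polynomial.C ((Real.sqrt (px 1) : ℝ) : ℂ) = 1 := by
        rw [← _root_.map_mul, ← _root_.map_mul, ← _root_.map_add, ← sq, ← sq, hab, _root_.map_one]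
      simp only [Matrix.det_succ_row_zero, Fin.sum_univ_succ, Matrix.submatrix_apply, _root_.map_mul]
      simp only [Fin.isValue, Matrix.cons_val', Matrix.cons_val_zero, Matrix.empty_val',
        Matrix.cons_val_fin_one, Matrix.cons_val_one, Matrix.head_cons, Matrix.head_fin_const,
        Fin.succ_zero_eq_one, Matrix.cons_val_succ, Fin.succ_one_eq_two,
        Matrix.det_unique, Fin.default_eq_zero, Matrix.submatrix_apply,
        Fin.succAbove_zero, Matrix.submatrix_submatrix, _root_.map_zero, _root_.map_one]
      norm_num [show (Fin.succAbove 2 0 : Fin 3) = 0 by decide,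
        show (Fin.succAbove 2 1 : Fin 3) = 1 by decide,
        show ((Fin.succ 2).succAbove 0 : Fin 4) = 0 by decide,
        show ((Fin.succ 2).succAbove 1 : Fin 4) = 1 by decide,
        show (Fin.castSucc 2 : Fin 4) = 2 by decide,
        Matrix.cons_val_succ, Matrix.cons_val_zero, Matrix.cons_val_one, Matrix.vecHead,
        Matrix.vecTail, Fintype.prod_prod_type, Fin.prod_univ_two, Prod.mk.injEq]
      simp only [show (Fin.succAbove 2 2 : Fin 4) = 3 by decide,
        show (Fin.succAbove 2 1 : Fin 4) = 1 by decide,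
        show (Fin.succAbove 2 0 : Fin 4) = 0 by decide,
        Matrix.cons_val_succ, Matrix.cons_val_zero, Matrix.cons_val_one, Matrix.cons_val,
        Matrix.vecHead, Matrix.vecTail]
      linear_combination (-(Polynomial.X : Polynomial ℂ)^3) * hC
    have e1 : vnEntropy (Matrix.diagonal fun i : Fin 2 => ((px i : ℝ) : ℂ)) =
        -(px 0 * Real.log (px 0) + px 1 * Real.log (px 1)) := by
      rw [DephAux.vnEntropy_diagonal_real (fun i : Fin 2 => px i), Fin.sum_univ_two]
    have e2 : vnEntropy τout = -(px 0 * Real.log (px 0) + px 1 * Real.log (px 1)) := by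
      rw [hτout', DephAux.vnEntropy_diagonal_real
        (fun q : Fin 2 × Fin 2 => if q.1 = q.2 then px q.1 else 0)]
      rw [Fintype.sum_prod_type]
      simp [Fin.sum_univ_two]
    have e3 : vnEntropy τ = 0 := by
      rw [DephAux.vnEntropy_of_charpoly τ hτherm _ hchar]
      rw [Fintype.sum_prod_type]
      simp [Fin.sum_univ_two, Prod.ext_iff]
    rw [mutInfo, mutInfo, hm1, hm2, hm3, hm4, e2, e3, e1]
    ring
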